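/- Theorem 3.1(1), trace-norm separation: For every state ρ on ℂ^{d_1} ⊗ ⋯ ⊗ ℂ^{d_n}, inf_{σ ∈ 𝒫} ‖ρ − σ‖₁ ≥ Δ_B(ρ) / ( m + ∑_{1 ≤ i < j ≤ m} φ^{(n)}_{ij} )^{1/2}. -/

import Mathlib

open scoped BigOperators ComplexOrder

namespace Parity

variable {n : ℕ} {d : Fin n → ℕ}

/-- Kronecker product of `n` matrices, as a matrix over the product index set. -/
def kron (a : ∀ r : Fin n, Matrix (Fin (d r)) (Fin (d r)) ℂ) :
    Matrix (∀ r, Fin (d r)) (∀ r, Fin (d r)) ℂ :=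
  fun i j => ∏ r, a r (i r) (j r)

/-- The ℓ²-operator norm of a complex matrix. -/
noncomputable def opNorm {I : Type*} [Fintype I] [DecidableEq I] (A : Matrix I I ℂ) : ℝ :=
  ‖Matrix.toEuclideanCLM (𝕜 := ℂ) A‖

/-- The defect weight φ⁽ⁿ⁾ᵢⱼ. -/
noncomputable def phi {m : ℕ} (a : ∀ r : Fin n, Fin m → Matrix (Fin (d r)) (Fin (d r)) ℂ)
    (i j : Fin m) : ℝ :=
  (2 : ℝ) ^ ((1 : ℤ) - n) *
    ∑ S ∈ Finset.univ.filter (fun S : Finset (Fin n) => Even S.card),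
      (∏ r ∈ S, opNorm (a r i * a r j - a r j * a r i)) *
        (∏ r ∈ Sᶜ, opNorm (a r i * a r j + a r j * a r i))

/-- A state: positive semidefinite with trace one. -/
def IsState {I : Type*} [Fintype I] (ρ : Matrix I I ℂ) : Prop :=
  ρ.PosSemidef ∧ ρ.trace = 1

/-- The trace norm `Tr √(AᴴA)`. -/
noncomputable def traceNorm {I : Type*} [Fintype I] [DecidableEq I] (A : Matrix I I ℂ) : ℝ :=
  (((Matrix.posSemidef_conjTranspose_mul_self A).1.eigenvectorUnitary : Matrix I I ℂ) *
      Matrix.diagonal (fun i => ((√((Matrix.posSemidef_conjTranspose_mul_self A).1.eigenvalues i) : ℝ) : ℂ)) *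
      (star (Matrix.posSemidef_conjTranspose_mul_self A).1.eigenvectorUnitary : Matrix I I ℂ)).trace.re

/-- Logarithm of a Hermitian matrix via the functional calculus (junk value otherwise);
an eigenvalue `0` contributes `Real.log 0 = 0`. -/
noncomputable def mlog {I : Type*} [Fintype I] [DecidableEq I] (A : Matrix I I ℂ) :
    Matrix I I ℂ :=
  if hA : A.IsHermitian then
    (hA.eigenvectorUnitary : Matrix I I ℂ) *
      Matrix.diagonal (fun i => (Real.log (hA.eigenvalues i) : ℂ)) *
      (star hA.eigenvectorUnitary : Matrix I I ℂ)
  else 0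

/-- Quantum relative entropy `D(ρ‖σ) = Tr(ρ (log ρ − log σ))` (natural logarithm). -/
noncomputable def relEntropy {I : Type*} [Fintype I] [DecidableEq I] (ρ σ : Matrix I I ℂ) : ℝ :=
  (Matrix.trace (ρ * (mlog ρ - mlog σ))).re

/-- The `r`-th marginal (partial trace over all other factors). -/
noncomputable def marginal (ρ : Matrix (∀ r, Fin (d r)) (∀ r, Fin (d r)) ℂ) (r : Fin n) :
    Matrix (Fin (d r)) (Fin (d r)) ℂ :=
  fun a b => ∑ k : ∀ s, Fin (d s), if k r = a then ρ k (Function.update k r b) else 0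

/-- Total correlation `I_tot(ρ) = D(ρ‖ρ₁ ⊗ ⋯ ⊗ ρₙ)`. -/
noncomputable def Itot (ρ : Matrix (∀ r, Fin (d r)) (∀ r, Fin (d r)) ℂ) : ℝ :=
  relEntropy ρ (kron (fun r => marginal ρ r))

/-- The set of product states. -/
def ProdStates (d : Fin n → ℕ) : Set (Matrix (∀ r, Fin (d r)) (∀ r, Fin (d r)) ℂ) :=
  {σ | ∃ s : ∀ r : Fin n, Matrix (Fin (d r)) (Fin (d r)) ℂ,
    (∀ r, IsState (s r)) ∧ σ = kron s}

/-- The product threshold `Γ_prod(B)`. -/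
noncomputable def Gamma (d : Fin n → ℕ) (B : Matrix (∀ r, Fin (d r)) (∀ r, Fin (d r)) ℂ) : ℝ :=
  sSup {x : ℝ | ∃ σ ∈ ProdStates d, x = (Matrix.trace (σ * B)).re}

/-- The excess `Δ_B(ρ)`. -/
noncomputable def excess (d : Fin n → ℕ) (B ρ : Matrix (∀ r, Fin (d r)) (∀ r, Fin (d r)) ℂ) : ℝ :=
  max ((Matrix.trace (ρ * B)).re - Gamma d B) 0

end Parity

set_option linter.unusedSectionVars false

namespace ParityAux
open Parity Matrix
open scoped Matrix.Norms.L2Operator MatrixOrder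

variable {n : ℕ} {d : Fin n → ℕ}
variable {I : Type*} [Fintype I] [DecidableEq I]

lemma opNorm_eq (A : Matrix I I ℂ) : opNorm A = ‖A‖ := (Matrix.cstar_norm_def A).symm

lemma traceNorm_eq_sqrt (A : Matrix I I ℂ) :
    traceNorm A = (CFC.sqrt (Aᴴ * A)).trace.re := by
  have h0 : (0 : Matrix I I ℂ) ≤ Aᴴ * A := (posSemidef_conjTranspose_mul_self A).nonneg
  rw [CFC.sqrt_eq_real_sqrt _ h0, cfcₙ_eq_cfc, (posSemidef_conjTranspose_mul_self A).1.cfc_eq,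
    IsHermitian.cfc, Unitary.conjStarAlgAut_apply]
  rfl

lemma kron_mul (a b : ∀ r : Fin n, Matrix (Fin (d r)) (Fin (d r)) ℂ) :
    kron a * kron b = kron (fun r => a r * b r) := by
  ext i j
  simp only [Matrix.mul_apply, kron]
  rw [Finset.prod_univ_sum, Fintype.piFinset_univ]
  exact Finset.sum_congr rfl fun k _ => Finset.prod_mul_distrib.symm

lemma kron_conjTranspose (a : ∀ r : Fin n, Matrix (Fin (d r)) (Fin (d r)) ℂ) :
    (kron a)ᴴ = kron (fun r => (a r)ᴴ) := by
  ext i j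
  simp only [conjTranspose_apply, kron, star_prod]

lemma kron_one : kron (fun r : Fin n => (1 : Matrix (Fin (d r)) (Fin (d r)) ℂ)) = 1 := by
  ext i j
  by_cases h : i = j
  · subst h; simp [kron, Matrix.one_apply]
  · have : ∃ r, i r ≠ j r := by
      by_contra hc
      push_neg at hc
      exact h (funext hc)
    obtain ⟨r, hr⟩ := this
    rw [Matrix.one_apply_ne h]
    exact Finset.prod_eq_zero (Finset.mem_univ r) (Matrix.one_apply_ne hr)

lemma kron_smul (z : Fin n → ℂ) (a : ∀ r : Fin n, Matrix (Fin (d r)) (Fin (d r)) ℂ) :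
    kron (fun r => z r • a r) = (∏ r, z r) • kron a := by
  ext i j
  simp only [kron, Matrix.smul_apply, smul_eq_mul]
  rw [Finset.prod_mul_distrib]

lemma kron_smul_one (z : Fin n → ℝ) :
    kron (fun r : Fin n => ((z r : ℂ)) • (1 : Matrix (Fin (d r)) (Fin (d r)) ℂ)) =
      ((∏ r, z r : ℝ) : ℂ) • 1 := by
  rw [kron_smul, kron_one]
  norm_cast

lemma kron_posSemidef {p : ∀ r : Fin n, Matrix (Fin (d r)) (Fin (d r)) ℂ}
    (h : ∀ r, (p r).PosSemidef) : (kron p).PosSemidef := by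
  have h1 : kron p = (kron fun r => CFC.sqrt (p r))ᴴ * (kron fun r => CFC.sqrt (p r)) := by
    rw [kron_conjTranspose, kron_mul]
    have : (fun r => (CFC.sqrt (p r))ᴴ * CFC.sqrt (p r)) = p :=
      funext fun r => by
        rw [(CFC.sqrt_nonneg (p r)).posSemidef.1.eq, CFC.sqrt_mul_sqrt_self _ (h r).nonneg]
    rw [this]
  rw [h1]
  exact posSemidef_conjTranspose_mul_self _


lemma kron_isHermitian {a : ∀ r : Fin n, Matrix (Fin (d r)) (Fin (d r)) ℂ}
    (h : ∀ r, (a r).IsHermitian) : (kron a).IsHermitian := by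
  have : (fun r => (a r)ᴴ) = a := funext fun r => h r
  show _ = _
  rw [kron_conjTranspose, this]

lemma kron_trace (a : ∀ r : Fin n, Matrix (Fin (d r)) (Fin (d r)) ℂ) :
    (kron a).trace = ∏ r, (a r).trace := by
  simp only [Matrix.trace, Matrix.diag, kron]
  rw [Finset.prod_univ_sum, Fintype.piFinset_univ]

end ParityAux

set_option linter.unusedSectionVars false
namespace ParityAux
open Matrix
open scoped Matrix.Norms.L2Operator MatrixOrder

variable {I : Type*} [Fintype I] [DecidableEq I]

/-- Euclidean norm of a plain vector. -/
noncomputable def evn (v : I → ℂ) : ℝ := ‖(WithLp.equiv 2 (I → ℂ)).symm v‖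

lemma evn_nonneg (v : I → ℂ) : 0 ≤ evn v := norm_nonneg _

lemma star_dot_self (v : I → ℂ) : dotProduct (star v) v = ((evn v : ℝ) : ℂ) ^ 2 := by
  have := EuclideanSpace.inner_eq_star_dotProduct (𝕜 := ℂ)
    ((WithLp.equiv 2 (I → ℂ)).symm v) ((WithLp.equiv 2 (I → ℂ)).symm v)
  rw [inner_self_eq_norm_sq_to_K] at this
  rw [dotProduct_comm]
  simpa [evn] using this.symm

lemma dot_conj_mul (A : Matrix I I ℂ) (x : I → ℂ) :
    dotProduct (star x) ((Aᴴ * A) *ᵥ x) = ((evn (A *ᵥ x) : ℝ) : ℂ) ^ 2 := by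
  rw [← star_dot_self (A *ᵥ x), star_mulVec, ← dotProduct_mulVec, ← Matrix.mulVec_mulVec]

lemma mulVec_norm_le (A : Matrix I I ℂ) (x : I → ℂ) : evn (A *ᵥ x) ≤ ‖A‖ * evn x := by
  have := Matrix.l2_opNorm_mulVec A ((WithLp.equiv 2 (I → ℂ)).symm x)
  simpa [evn] using this

lemma norm_le_iff {A : Matrix I I ℂ} {c : ℝ} (hc : 0 ≤ c) :
    ‖A‖ ≤ c ↔ (((c : ℂ) ^ 2) • 1 - Aᴴ * A).PosSemidef := by
  constructor
  · intro h
    rw [posSemidef_iff_dotProduct_mulVec]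
    constructor
    · show _ = _
      simp [Matrix.conjTranspose_smul, Matrix.conjTranspose_sub, ← Complex.ofReal_pow,
        (Matrix.posSemidef_conjTranspose_mul_self A).1.eq]
    · intro x
      rw [Matrix.sub_mulVec, dotProduct_sub, Matrix.smul_mulVec,
        Matrix.one_mulVec, dotProduct_smul, dot_conj_mul, star_dot_self]
      have h1 : evn (A *ᵥ x) ≤ c * evn x :=
        (mulVec_norm_le A x).trans (by
          have := evn_nonneg x
          nlinarith)
      have h2 : evn (A *ᵥ x) ^ 2 ≤ (c * evn x) ^ 2 := by
        have := evn_nonneg (A *ᵥ x); nlinarith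
      have : (0:ℝ) ≤ c ^ 2 * evn x ^ 2 - evn (A *ᵥ x) ^ 2 := by nlinarith
      rw [smul_eq_mul]
      calc (0:ℂ) ≤ ((c ^ 2 * evn x ^ 2 - evn (A *ᵥ x) ^ 2 : ℝ) : ℂ) :=
            Complex.zero_le_real.mpr this
        _ = (c : ℂ) ^ 2 * ((evn x : ℝ) : ℂ) ^ 2 - ((evn (A *ᵥ x) : ℝ) : ℂ) ^ 2 := by
            push_cast; ring
  · intro h
    rw [Matrix.cstar_norm_def]
    refine ContinuousLinearMap.opNorm_le_bound _ hc fun x => ?_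
    set v : I → ℂ := WithLp.equiv 2 (I → ℂ) x with hv
    have h0 := h.dotProduct_mulVec_nonneg v
    rw [Matrix.sub_mulVec, dotProduct_sub, Matrix.smul_mulVec,
      Matrix.one_mulVec, dotProduct_smul, dot_conj_mul, star_dot_self,
      smul_eq_mul] at h0
    have h1 : (0:ℂ) ≤ ((c ^ 2 * evn v ^ 2 - evn (A *ᵥ v) ^ 2 : ℝ) : ℂ) := by
      refine le_of_le_of_eq h0 ?_
      push_cast; ring
    have h2 : 0 ≤ c ^ 2 * evn v ^ 2 - evn (A *ᵥ v) ^ 2 := Complex.zero_le_real.mp h1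
    have hx : x = (WithLp.equiv 2 (I → ℂ)).symm v := ((WithLp.equiv 2 (I → ℂ)).symm_apply_apply x).symm
    have hA : Matrix.toEuclideanCLM (𝕜 := ℂ) A x = (WithLp.equiv 2 (I → ℂ)).symm (A *ᵥ v) := by
      conv_lhs => rw [hx]
      rfl
    have hxn : ‖x‖ = evn v := by rw [hx]; rfl
    rw [hA, hxn]
    show evn (A *ᵥ v) ≤ c * evn v
    have e1 := evn_nonneg (A *ᵥ v)
    have e2 := evn_nonneg v
    have h3 : evn (A *ᵥ v) ^ 2 ≤ (c * evn v) ^ 2 := by nlinarith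
    exact (pow_le_pow_iff_left₀ e1 (mul_nonneg hc e2) two_ne_zero).mp h3

end ParityAux

namespace ParityAux
section C3
open Parity Matrix
open scoped Matrix.Norms.L2Operator MatrixOrder

variable {n : ℕ} {d : Fin n → ℕ}

lemma kron_update_sub (f : ∀ r : Fin n, Matrix (Fin (d r)) (Fin (d r)) ℂ) (r : Fin n)
    (x y : Matrix (Fin (d r)) (Fin (d r)) ℂ) :
    kron (Function.update f r x) - kron (Function.update f r y) =
      kron (Function.update f r (x - y)) := by
  ext i j
  have key : ∀ z : Matrix (Fin (d r)) (Fin (d r)) ℂ,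
      kron (Function.update f r z) i j =
        z (i r) (j r) * ∏ s ∈ Finset.univ \ {r}, f s (i s) (j s) := by
    intro z
    have hfun : (fun s => (Function.update f r z) s (i s) (j s)) =
        Function.update (fun s => f s (i s) (j s)) r (z (i r) (j r)) := by
      funext s
      rcases eq_or_ne s r with h | h
      · subst h; simp
      · simp [Function.update_of_ne h]
    show (∏ s, (Function.update f r z) s (i s) (j s)) = _
    rw [hfun, Finset.prod_update_of_mem (Finset.mem_univ r)]
  show kron (Function.update f r x) i j - kron (Function.update f r y) i j = _
  rw [key, key, key, Matrix.sub_apply]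
  ring

lemma kron_sub_posSemidef {p q : ∀ r : Fin n, Matrix (Fin (d r)) (Fin (d r)) ℂ}
    (hp : ∀ r, (p r).PosSemidef) (hqp : ∀ r, (q r - p r).PosSemidef) :
    (kron q - kron p).PosSemidef := by
  have hq : ∀ r, (q r).PosSemidef := fun r => by
    have := ((hqp r).add (hp r)); simpa using this
  have key : ∀ T : Finset (Fin n),
      (kron q - kron (fun s => if s ∈ T then p s else q s)).PosSemidef := by
    intro T
    induction T using Finset.induction_on with
    | empty => simpa using Matrix.PosSemidef.zero
    | @insert a T ha ih =>
      set g : ∀ r : Fin n, Matrix (Fin (d r)) (Fin (d r)) ℂ :=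
        fun s => if s ∈ T then p s else q s with hg
      have hga : g a = q a := if_neg ha
      have hins : (fun s => if s ∈ insert a T then p s else q s) =
          Function.update g a (p a) := by
        funext s
        rcases eq_or_ne s a with h | h
        · subst h; simp
        · simp [Function.update_of_ne h, hg, Finset.mem_insert, h]
      have e1 := kron_update_sub g a (g a) (p a)
      rw [Function.update_eq_self, hga] at e1
      have step : (kron g - kron (Function.update g a (p a))).PosSemidef := by
        rw [e1]
        refine kron_posSemidef fun r => ?_
        rcases eq_or_ne r a with h | h
        · subst h; rw [Function.update_self]; exact hqp r
        · rw [Function.update_of_ne h]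
          by_cases hrT : r ∈ T
          · simp only [hg, if_pos hrT]; exact hp r
          · simp only [hg, if_neg hrT]; exact hq r
      rw [hins, ← sub_add_sub_cancel (kron q) (kron g) (kron (Function.update g a (p a)))]
      exact ih.add step
  have := key Finset.univ
  simpa using this

lemma kron_norm_le (a : ∀ r : Fin n, Matrix (Fin (d r)) (Fin (d r)) ℂ) :
    ‖kron a‖ ≤ ∏ r, ‖a r‖ := by
  have hprod : 0 ≤ ∏ r, ‖a r‖ := Finset.prod_nonneg fun r _ => norm_nonneg _
  rw [norm_le_iff hprod]
  have hpsd := kron_sub_posSemidef (p := fun r => (a r)ᴴ * a r)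
      (q := fun r => ((‖a r‖ : ℂ)) ^ 2 • 1)
      (fun r => posSemidef_conjTranspose_mul_self _)
      (fun r => (norm_le_iff (norm_nonneg (a r))).mp le_rfl)
  have e1 : kron (fun r : Fin n => ((‖a r‖ : ℂ)) ^ 2 • (1 : Matrix (Fin (d r)) (Fin (d r)) ℂ)) =
      ((∏ r, ‖a r‖ : ℝ) : ℂ) ^ 2 • 1 := by
    have : (fun r : Fin n => ((‖a r‖ : ℂ)) ^ 2 • (1 : Matrix (Fin (d r)) (Fin (d r)) ℂ)) =
        fun r : Fin n => ((‖a r‖ ^ 2 : ℝ) : ℂ) • (1 : Matrix (Fin (d r)) (Fin (d r)) ℂ) := by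
      funext r; push_cast; rfl
    rw [this, kron_smul_one]
    congr 1
    push_cast [Finset.prod_pow]
    ring
  have e2 : kron (fun r => (a r)ᴴ * a r) = (kron a)ᴴ * kron a := by
    rw [kron_conjTranspose, kron_mul]
  rw [e1, e2] at hpsd
  exact hpsd

end C3
end ParityAux

namespace ParityAux
section C4
open Parity Matrix
open scoped Matrix.Norms.L2Operator MatrixOrder

variable {I : Type*} [Fintype I] [DecidableEq I]

lemma posSemidef_re_diag {M : Matrix I I ℂ} (h : M.PosSemidef) (k : I) :
    0 ≤ (M k k).re := by
  have h0 := h.dotProduct_mulVec_nonneg (Pi.single k 1)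
  have he : dotProduct (star (Pi.single k 1)) (M *ᵥ Pi.single k 1) = M k k := by
    simp [Matrix.mulVec_single, dotProduct, Pi.single_apply, apply_ite]
  rw [he] at h0
  exact (Complex.nonneg_iff.mp h0).1

lemma traceNorm_nonneg (A : Matrix I I ℂ) : 0 ≤ traceNorm A := by
  have h := (CFC.sqrt_nonneg (Aᴴ * A)).posSemidef
  rw [traceNorm_eq_sqrt]
  rw [Matrix.trace, Complex.re_sum]
  exact Finset.sum_nonneg fun k _ => posSemidef_re_diag h k

lemma traceNorm_of_state {σ : Matrix I I ℂ} (h : σ.PosSemidef) (ht : σ.trace = 1) :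
    traceNorm σ = 1 := by
  have hsq : σ ^ 2 = σᴴ * σ := by rw [pow_two, h.1.eq]
  have hs : σ = CFC.sqrt (σᴴ * σ) :=
    (CFC.sqrt_unique (by rw [← pow_two]; exact hsq) h.nonneg).symm
  rw [traceNorm_eq_sqrt]
  rw [← hs, ht, Complex.one_re]

lemma traceNorm_herm_eq {X : Matrix I I ℂ} (hX : X.IsHermitian) :
    traceNorm X = ∑ k, |hX.eigenvalues k| := by
  set U : Matrix I I ℂ := (hX.eigenvectorUnitary : Matrix I I ℂ) with hUdef
  have hU2 : star U * U = 1 := (Matrix.mem_unitaryGroup_iff').mp hX.eigenvectorUnitary.2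
  set R : Matrix I I ℂ :=
    U * Matrix.diagonal (fun k => ((|hX.eigenvalues k| : ℝ) : ℂ)) * star U with hR
  have hRpsd : R.PosSemidef := by
    rw [hR, Matrix.star_eq_conjTranspose]
    exact Matrix.PosSemidef.mul_mul_conjTranspose_same
      (Matrix.posSemidef_diagonal_iff.mpr fun k =>
        Complex.zero_le_real.mpr (abs_nonneg _)) U
  have key : ∀ f g : I → ℂ,
      (U * Matrix.diagonal f * star U) * (U * Matrix.diagonal g * star U) =
        U * Matrix.diagonal (fun k => f k * g k) * star U := by
    intro f g
    rw [← Matrix.diagonal_mul_diagonal]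
    calc (U * Matrix.diagonal f * star U) * (U * Matrix.diagonal g * star U)
        = U * Matrix.diagonal f * (star U * U) * Matrix.diagonal g * star U := by
          simp only [Matrix.mul_assoc]
      _ = U * (Matrix.diagonal f * Matrix.diagonal g) * star U := by
          rw [hU2]; simp only [Matrix.mul_assoc, Matrix.one_mul]
  have hsq : R ^ 2 = Xᴴ * X := by
    rw [hX.eq, pow_two, hR, key]
    conv_rhs => rw [hX.spectral_theorem, Unitary.conjStarAlgAut_apply]
    rw [key]
    have hfun : (fun k => ((|hX.eigenvalues k| : ℝ) : ℂ) * ((|hX.eigenvalues k| : ℝ) : ℂ)) =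
        (fun k => (RCLike.ofReal ∘ hX.eigenvalues) k * (RCLike.ofReal ∘ hX.eigenvalues) k) := by
      funext k
      show ((|hX.eigenvalues k| : ℝ) : ℂ) * ((|hX.eigenvalues k| : ℝ) : ℂ) =
        ((hX.eigenvalues k : ℝ) : ℂ) * ((hX.eigenvalues k : ℝ) : ℂ)
      rw [← Complex.ofReal_mul, ← Complex.ofReal_mul, abs_mul_abs_self]
    congr 1
    congr 1
    exact congrArg Matrix.diagonal hfun
  have hsqrt : R = CFC.sqrt (Xᴴ * X) :=
    (CFC.sqrt_unique (by rw [← pow_two]; exact hsq) hRpsd.nonneg).symm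
  rw [traceNorm_eq_sqrt]
  rw [← hsqrt, hR, Matrix.trace_mul_cycle, hU2, Matrix.one_mul, Matrix.trace_diagonal,
    Complex.re_sum]
  simp

end C4
end ParityAux
namespace ParityAux
section C5
open Parity Matrix
open scoped Matrix.Norms.L2Operator MatrixOrder

variable {I : Type*} [Fintype I] [DecidableEq I]

lemma abs_diag_le {U : Matrix I I ℂ} (Y : Matrix I I ℂ) (hU : star U * U = 1) (k : I) :
    ‖(star U * Y * U) k k‖ ≤ ‖Y‖ := by
  set u : I → ℂ := fun p => U p k with hu
  have h1 : star u = fun p => (star U) k p := by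
    funext p; simp [hu, Matrix.star_apply]
  have hM : dotProduct (star u) (Y *ᵥ u) = (star U * Y * U) k k := by
    rw [dotProduct_mulVec, h1]
    simp [Matrix.vecMul, dotProduct, Matrix.mul_apply, hu]
  have hcs : ‖dotProduct (star u) (Y *ᵥ u)‖ ≤ evn u * evn (Y *ᵥ u) := by
    have := norm_inner_le_norm (𝕜 := ℂ) ((WithLp.equiv 2 (I → ℂ)).symm u)
      ((WithLp.equiv 2 (I → ℂ)).symm (Y *ᵥ u))
    rw [EuclideanSpace.inner_eq_star_dotProduct] at this
    rw [dotProduct_comm]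
    simpa [evn] using this
  have hud : dotProduct (star u) u = 1 := by
    have h2 : (star U * U) k k = 1 := by rw [hU]; simp
    rw [← h2]
    simp [Matrix.mul_apply, dotProduct, h1, hu]
  have hn1 : evn u ^ 2 = 1 := by
    have := star_dot_self u
    rw [hud] at this
    exact_mod_cast congrArg Complex.re this.symm
  have hn2 : evn u = 1 := by nlinarith [evn_nonneg u]
  calc ‖(star U * Y * U) k k‖ = ‖dotProduct (star u) (Y *ᵥ u)‖ := by rw [hM]
    _ ≤ evn u * evn (Y *ᵥ u) := hcs
    _ ≤ evn u * (‖Y‖ * evn u) := by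
        refine mul_le_mul_of_nonneg_left (mulVec_norm_le Y u) (evn_nonneg u)
    _ = ‖Y‖ := by rw [hn2]; ring

lemma holder {X : Matrix I I ℂ} (hX : X.IsHermitian) (Y : Matrix I I ℂ) :
    |(Matrix.trace (X * Y)).re| ≤ traceNorm X * ‖Y‖ := by
  set U : Matrix I I ℂ := (hX.eigenvectorUnitary : Matrix I I ℂ) with hUdef
  have hU2 : star U * U = 1 := (Matrix.mem_unitaryGroup_iff').mp hX.eigenvectorUnitary.2
  have hdiagtr : ∀ (f : I → ℂ) (M : Matrix I I ℂ),
      Matrix.trace (Matrix.diagonal f * M) = ∑ k, f k * M k k := by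
    intro f M
    simp [Matrix.trace, Matrix.diag, Matrix.diagonal_mul]
  have htr : Matrix.trace (X * Y) =
      ∑ k, (RCLike.ofReal (hX.eigenvalues k) : ℂ) * (star U * Y * U) k k := by
    conv_lhs => rw [hX.spectral_theorem, Unitary.conjStarAlgAut_apply]
    rw [show (U * Matrix.diagonal (RCLike.ofReal ∘ hX.eigenvalues) * star U) * Y =
      (U * Matrix.diagonal (RCLike.ofReal ∘ hX.eigenvalues)) * (star U * Y) by
        simp only [Matrix.mul_assoc]]
    rw [Matrix.trace_mul_comm]
    rw [show (star U * Y) * (U * Matrix.diagonal (RCLike.ofReal ∘ hX.eigenvalues)) =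
      (star U * Y * U) * Matrix.diagonal (RCLike.ofReal ∘ hX.eigenvalues) by
        simp only [Matrix.mul_assoc]]
    rw [Matrix.trace_mul_comm, hdiagtr]
    rfl
  rw [htr, Complex.re_sum]
  refine (Finset.abs_sum_le_sum_abs _ _).trans ?_
  rw [traceNorm_herm_eq hX, Finset.sum_mul]
  refine Finset.sum_le_sum fun k _ => ?_
  calc |((RCLike.ofReal (hX.eigenvalues k) : ℂ) * (star U * Y * U) k k).re|
      ≤ ‖(RCLike.ofReal (hX.eigenvalues k) : ℂ) * (star U * Y * U) k k‖ :=
        Complex.abs_re_le_norm _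
    _ = |hX.eigenvalues k| * ‖(star U * Y * U) k k‖ := by
        rw [norm_mul]
        congr 1
        show ‖((hX.eigenvalues k : ℝ) : ℂ)‖ = _
        rw [Complex.norm_real, Real.norm_eq_abs]
    _ ≤ |hX.eigenvalues k| * ‖Y‖ :=
        mul_le_mul_of_nonneg_left (abs_diag_le Y hU2 k) (abs_nonneg _)

end C5
end ParityAux
namespace ParityAux
section C6
open Parity Matrix
open scoped Matrix.Norms.L2Operator MatrixOrder

lemma sum_split {M : Type*} [AddCommMonoid M] {m : ℕ} (f : Fin m → Fin m → M) :
    ∑ i, ∑ j, f i j = (∑ i, f i i) +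
      ∑ i, ∑ j ∈ Finset.univ.filter (fun j => i < j), (f i j + f j i) := by
  have h1 : ∀ i : Fin m, (∑ j, f i j) =
      (∑ j ∈ Finset.univ.filter (fun j => i < j), f i j) +
        (f i i + ∑ j ∈ Finset.univ.filter (fun j => j < i), f i j) := by
    intro i
    rw [← Finset.sum_filter_add_sum_filter_not Finset.univ (fun j => i < j) (f i)]
    congr 1
    have he : Finset.univ.filter (fun j => ¬ i < j) =
        insert i (Finset.univ.filter (fun j : Fin m => j < i)) := by
      ext j
      simp [not_lt, le_iff_lt_or_eq, or_comm, eq_comm]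
    rw [he, Finset.sum_insert (by simp)]
  have h2 : (∑ i : Fin m, ∑ j ∈ Finset.univ.filter (fun j => j < i), f i j) =
      ∑ i : Fin m, ∑ j ∈ Finset.univ.filter (fun j => i < j), f j i := by
    refine Finset.sum_comm' ?_
    intro x y
    simp
  calc ∑ i, ∑ j, f i j
      = ∑ i, ((∑ j ∈ Finset.univ.filter (fun j => i < j), f i j) +
        (f i i + ∑ j ∈ Finset.univ.filter (fun j => j < i), f i j)) :=
        Finset.sum_congr rfl fun i _ => h1 i
    _ = (∑ i, ∑ j ∈ Finset.univ.filter (fun j => i < j), f i j) +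
        ((∑ i, f i i) + ∑ i, ∑ j ∈ Finset.univ.filter (fun j => j < i), f i j) := by
        rw [Finset.sum_add_distrib, Finset.sum_add_distrib]
    _ = (∑ i, f i i) +
        ∑ i, ∑ j ∈ Finset.univ.filter (fun j => i < j), (f i j + f j i) := by
        rw [h2]
        simp_rw [Finset.sum_add_distrib]
        abel

variable {n : ℕ} {d : Fin n → ℕ}

lemma phi_nonneg {m : ℕ} (a : ∀ r : Fin n, Fin m → Matrix (Fin (d r)) (Fin (d r)) ℂ)
    (i j : Fin m) : 0 ≤ phi a i j := by
  unfold phi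
  refine mul_nonneg (by positivity) (Finset.sum_nonneg fun S _ => ?_)
  refine mul_nonneg (Finset.prod_nonneg fun r _ => ?_) (Finset.prod_nonneg fun r _ => ?_) <;>
    · rw [opNorm_eq]; exact norm_nonneg _

lemma filter_not_mem_eq_compl (S : Finset (Fin n)) :
    Finset.univ.filter (fun r => ¬ r ∈ S) = Sᶜ := by
  ext r; simp [Finset.mem_compl]

lemma filter_mem_eq_self (S : Finset (Fin n)) :
    Finset.univ.filter (fun r => r ∈ S) = S := by
  ext r; simp

lemma pair_norm_le {m : ℕ} (a : ∀ r : Fin n, Fin m → Matrix (Fin (d r)) (Fin (d r)) ℂ)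
    (i j : Fin m) :
    ‖kron (fun r => a r i * a r j) + kron (fun r => a r j * a r i)‖ ≤ phi a i j := by
  classical
  set c : ∀ r : Fin n, Matrix (Fin (d r)) (Fin (d r)) ℂ :=
    fun r => a r i * a r j - a r j * a r i with hc
  set s : ∀ r : Fin n, Matrix (Fin (d r)) (Fin (d r)) ℂ :=
    fun r => a r i * a r j + a r j * a r i with hs
  set K : Finset (Fin n) → Matrix (∀ r, Fin (d r)) (∀ r, Fin (d r)) ℂ :=
    fun S => kron (fun r => if r ∈ S then c r else s r) with hK
  have expand : ∀ x y : ∀ r : Fin n, Matrix (Fin (d r)) (Fin (d r)) ℂ,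
      kron (fun r => x r + y r) =
        ∑ S : Finset (Fin n), kron (fun r => if r ∈ S then x r else y r) := by
    intro x y
    ext p q
    rw [Matrix.sum_apply]
    show (∏ r, (x r + y r) (p r) (q r)) = _
    simp only [Matrix.add_apply]
    rw [Finset.prod_add, ← Finset.powerset_univ]
    refine Finset.sum_congr rfl fun S hS => ?_
    show _ = ∏ r, (if r ∈ S then x r else y r) (p r) (q r)
    have : ∀ r : Fin n, (if r ∈ S then x r else y r) (p r) (q r) =
        if r ∈ S then x r (p r) (q r) else y r (p r) (q r) := fun r => by
      split_ifs <;> rfl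
    simp only [this]
    rw [Finset.prod_ite, filter_mem_eq_self, filter_not_mem_eq_compl,
      Finset.compl_eq_univ_sdiff]
  have hab : (fun r : Fin n => a r i * a r j) = fun r => (2⁻¹ : ℂ) • (c r + s r) := by
    funext r
    ext p q
    simp only [hc, hs, Matrix.smul_apply, Matrix.add_apply, Matrix.sub_apply, smul_eq_mul]
    ring
  have hba : (fun r : Fin n => a r j * a r i) = fun r => (2⁻¹ : ℂ) • (-(c r) + s r) := by
    funext r
    ext p q
    simp only [hc, hs, Matrix.smul_apply, Matrix.add_apply, Matrix.sub_apply, Matrix.neg_apply,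
      smul_eq_mul]
    ring
  have hconst : (∏ _r : Fin n, (2⁻¹ : ℂ)) = (2⁻¹ : ℂ) ^ n := by
    rw [Finset.prod_const, Finset.card_univ, Fintype.card_fin]
  have kron1 : kron (fun r => a r i * a r j) = (2⁻¹ : ℂ) ^ n • ∑ S : Finset (Fin n), K S := by
    rw [hab, kron_smul, hconst, expand]
  have ksign : ∀ S : Finset (Fin n),
      kron (fun r => if r ∈ S then -(c r) else s r) = ((-1 : ℂ) ^ S.card) • K S := by
    intro S
    have h1 : (fun r : Fin n => if r ∈ S then -(c r) else s r) =
        fun r => (if r ∈ S then (-1 : ℂ) else 1) • (if r ∈ S then c r else s r) := by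
      funext r
      by_cases h : r ∈ S
      · rw [if_pos h, if_pos h, if_pos h]
        exact (neg_one_smul ℂ (c r)).symm
      · rw [if_neg h, if_neg h, if_neg h]
        exact (one_smul ℂ (s r)).symm
    rw [h1, kron_smul]
    congr 1
    rw [Finset.prod_ite, filter_mem_eq_self, filter_not_mem_eq_compl]
    simp [Finset.prod_const]
  have kron2 : kron (fun r => a r j * a r i) =
      (2⁻¹ : ℂ) ^ n • ∑ S : Finset (Fin n), ((-1 : ℂ) ^ S.card) • K S := by
    rw [hba, kron_smul, hconst, expand]
    congr 1
    exact Finset.sum_congr rfl fun S _ => ksign S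
  have total : kron (fun r => a r i * a r j) + kron (fun r => a r j * a r i) =
      (2⁻¹ : ℂ) ^ n • ∑ S ∈ Finset.univ.filter (fun S : Finset (Fin n) => Even S.card),
        (2 : ℂ) • K S := by
    rw [kron1, kron2, ← smul_add, ← Finset.sum_add_distrib]
    congr 1
    rw [← Finset.sum_filter_add_sum_filter_not Finset.univ
      (fun S : Finset (Fin n) => Even S.card)]
    have hodd : ∑ S ∈ Finset.univ.filter
        (fun S : Finset (Fin n) => ¬ Even S.card), (K S + ((-1 : ℂ) ^ S.card) • K S) = 0 := by
      refine Finset.sum_eq_zero fun S hS => ?_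
      have : ((-1 : ℂ) ^ S.card) = -1 :=
        Odd.neg_one_pow (Nat.not_even_iff_odd.mp (Finset.mem_filter.mp hS).2)
      rw [this, neg_one_smul]
      exact add_neg_cancel _
    have heven : ∑ S ∈ Finset.univ.filter
        (fun S : Finset (Fin n) => Even S.card), (K S + ((-1 : ℂ) ^ S.card) • K S) =
        ∑ S ∈ Finset.univ.filter (fun S : Finset (Fin n) => Even S.card), (2 : ℂ) • K S := by
      refine Finset.sum_congr rfl fun S hS => ?_
      have : ((-1 : ℂ) ^ S.card) = 1 := Even.neg_one_pow (Finset.mem_filter.mp hS).2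
      rw [this]
      rw [two_smul, one_smul]
    rw [hodd, heven, add_zero]
  have Kbound : ∀ S : Finset (Fin n),
      ‖K S‖ ≤ (∏ r ∈ S, ‖c r‖) * ∏ r ∈ Sᶜ, ‖s r‖ := by
    intro S
    refine (kron_norm_le _).trans ?_
    have : ∀ r : Fin n, ‖if r ∈ S then c r else s r‖ =
        if r ∈ S then ‖c r‖ else ‖s r‖ := fun r => by split_ifs <;> rfl
    rw [Finset.prod_congr rfl fun r _ => this r, Finset.prod_ite, filter_mem_eq_self,
      filter_not_mem_eq_compl]
  calc ‖kron (fun r => a r i * a r j) + kron (fun r => a r j * a r i)‖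
      = ‖(2⁻¹ : ℂ) ^ n‖ * ‖∑ S ∈ Finset.univ.filter
          (fun S : Finset (Fin n) => Even S.card), (2 : ℂ) • K S‖ := by
        rw [total, norm_smul]
    _ ≤ (2⁻¹ : ℝ) ^ n * ∑ S ∈ Finset.univ.filter
          (fun S : Finset (Fin n) => Even S.card), 2 * ((∏ r ∈ S, ‖c r‖) * ∏ r ∈ Sᶜ, ‖s r‖) := by
        refine mul_le_mul ?_ ?_ (norm_nonneg _) (by positivity)
        · rw [norm_pow]
          simp
        · refine (norm_sum_le _ _).trans (Finset.sum_le_sum fun S _ => ?_)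
          rw [norm_smul]
          simp only [Complex.norm_ofNat]
          exact mul_le_mul_of_nonneg_left (Kbound S) (by norm_num)
    _ = phi a i j := by
        unfold phi
        rw [← Finset.mul_sum]
        have h2 : (2 : ℝ) ^ ((1 : ℤ) - n) = (2⁻¹ : ℝ) ^ n * 2 := by
          rw [zpow_sub₀ (two_ne_zero), zpow_one, zpow_natCast, inv_pow]
          field_simp
        rw [h2, mul_assoc]
        have hS : ∀ S : Finset (Fin n), (∏ r ∈ S, ‖c r‖) * ∏ r ∈ Sᶜ, ‖s r‖ =
            (∏ r ∈ S, opNorm (a r i * a r j - a r j * a r i)) *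
              ∏ r ∈ Sᶜ, opNorm (a r i * a r j + a r j * a r i) := by
          intro S
          simp only [opNorm_eq, hc, hs]
        rw [Finset.sum_congr rfl fun S _ => hS S]

end C6
end ParityAux
namespace ParityAux
section C7
open Parity Matrix
open scoped Matrix.Norms.L2Operator MatrixOrder

variable {n : ℕ} {d : Fin n → ℕ}

lemma B_norm_le {m : ℕ} (a : ∀ r : Fin n, Fin m → Matrix (Fin (d r)) (Fin (d r)) ℂ)
    (ha_sa : ∀ r i, (a r i).IsHermitian) (ha_norm : ∀ r i, opNorm (a r i) ≤ 1) :
    ‖∑ i : Fin m, kron (fun r => a r i)‖ ≤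
      Real.sqrt (m + ∑ i : Fin m, ∑ j ∈ Finset.univ.filter (fun j => i < j), phi a i j) := by
  set B := ∑ i : Fin m, kron (fun r => a r i) with hB
  have hBh : Bᴴ = B := by
    rw [hB, Matrix.conjTranspose_sum]
    exact Finset.sum_congr rfl fun i _ => kron_isHermitian (fun r => ha_sa r i)
  have hsq : ‖B‖ * ‖B‖ = ‖B * B‖ := by
    rw [← Matrix.l2_opNorm_conjTranspose_mul_self B, hBh]
  have hBB : B * B = (∑ i : Fin m, kron (fun r => a r i * a r i)) +
      ∑ i : Fin m, ∑ j ∈ Finset.univ.filter (fun j => i < j),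
        (kron (fun r => a r i * a r j) + kron (fun r => a r j * a r i)) := by
    rw [hB, Finset.sum_mul_sum]
    simp_rw [kron_mul]
    exact sum_split _
  have hdiag : ∀ i : Fin m, ‖kron (fun r => a r i * a r i)‖ ≤ 1 := by
    intro i
    refine (kron_norm_le _).trans ?_
    refine Finset.prod_le_one (fun r _ => norm_nonneg _) (fun r _ => ?_)
    have h1 := ha_norm r i
    rw [opNorm_eq] at h1
    calc ‖a r i * a r i‖ ≤ ‖a r i‖ * ‖a r i‖ := norm_mul_le _ _
      _ ≤ 1 := by nlinarith [norm_nonneg (a r i)]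
  have hBB_norm : ‖B * B‖ ≤
      m + ∑ i : Fin m, ∑ j ∈ Finset.univ.filter (fun j => i < j), phi a i j := by
    rw [hBB]
    refine (norm_add_le _ _).trans ?_
    have h1 : ‖∑ i : Fin m, kron (fun r => a r i * a r i)‖ ≤ (m : ℝ) :=
      (norm_sum_le _ _).trans ((Finset.sum_le_sum fun i _ => hdiag i).trans (by simp))
    have h2 : ‖∑ i : Fin m, ∑ j ∈ Finset.univ.filter (fun j => i < j),
        (kron (fun r => a r i * a r j) + kron (fun r => a r j * a r i))‖ ≤
        ∑ i : Fin m, ∑ j ∈ Finset.univ.filter (fun j => i < j), phi a i j :=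
      (norm_sum_le _ _).trans (Finset.sum_le_sum fun i _ =>
        (norm_sum_le _ _).trans (Finset.sum_le_sum fun j _ => pair_norm_le a i j))
    linarith
  have hBnn : 0 ≤ ‖B‖ := norm_nonneg _
  have hfin : ‖B‖ * ‖B‖ ≤
      m + ∑ i : Fin m, ∑ j ∈ Finset.univ.filter (fun j => i < j), phi a i j := by
    rw [hsq]; exact hBB_norm
  rw [show ‖B‖ = Real.sqrt (‖B‖ ^ 2) from (Real.sqrt_sq hBnn).symm]
  refine Real.sqrt_le_sqrt ?_
  rw [pow_two]
  exact hfin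

lemma prod_state_isState {σ : Matrix (∀ r, Fin (d r)) (∀ r, Fin (d r)) ℂ}
    (h : σ ∈ ProdStates d) : IsState σ := by
  obtain ⟨s, hs, rfl⟩ := h
  refine ⟨kron_posSemidef fun r => (hs r).1, ?_⟩
  rw [kron_trace]
  exact Finset.prod_eq_one fun r _ => (hs r).2

lemma prodStates_nonempty (hd : ∀ r, 1 ≤ d r) : (ProdStates d).Nonempty := by
  refine ⟨kron (fun r => (((d r : ℝ))⁻¹ : ℂ) • 1),
    (fun r => (((d r : ℝ))⁻¹ : ℂ) • 1), fun r => ⟨?_, ?_⟩, rfl⟩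
  · have hdg : (((d r : ℝ))⁻¹ : ℂ) • (1 : Matrix (Fin (d r)) (Fin (d r)) ℂ) =
        Matrix.diagonal (fun _ => (((d r : ℝ))⁻¹ : ℂ)) := by
      ext p q
      by_cases h : p = q
      · subst h; simp
      · simp [Matrix.one_apply_ne h, Matrix.diagonal_apply_ne _ h]
    show ((((d r : ℝ))⁻¹ : ℂ) • (1 : Matrix (Fin (d r)) (Fin (d r)) ℂ)).PosSemidef
    rw [hdg]
    have hle : (0 : Fin (d r) → ℂ) ≤ (fun _ => (((d r : ℝ))⁻¹ : ℂ)) := by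
      intro i
      simp only [Pi.zero_apply]
      rw [← Complex.ofReal_inv]
      exact Complex.zero_le_real.mpr (inv_nonneg.mpr (Nat.cast_nonneg _))
    exact Matrix.PosSemidef.diagonal hle
  · have hne : ((d r : ℕ) : ℂ) ≠ 0 := Nat.cast_ne_zero.mpr (by have := hd r; omega)
    show Matrix.trace ((((d r : ℝ))⁻¹ : ℂ) • (1 : Matrix (Fin (d r)) (Fin (d r)) ℂ)) = 1
    rw [Matrix.trace_smul, Matrix.trace_one, smul_eq_mul, Fintype.card_fin]
    push_cast
    exact inv_mul_cancel₀ hne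

lemma trace_le_gamma (B : Matrix (∀ r, Fin (d r)) (∀ r, Fin (d r)) ℂ)
    {σ : Matrix (∀ r, Fin (d r)) (∀ r, Fin (d r)) ℂ} (hσ : σ ∈ ProdStates d) :
    (Matrix.trace (σ * B)).re ≤ Gamma d B := by
  have hbdd : BddAbove {x : ℝ | ∃ σ ∈ ProdStates d, x = (Matrix.trace (σ * B)).re} := by
    refine ⟨‖B‖, fun x hx => ?_⟩
    obtain ⟨τ, hτ, rfl⟩ := hx
    have hst := prod_state_isState hτ
    have hh := holder hst.1.1 B
    rw [traceNorm_of_state hst.1 hst.2, one_mul] at hh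
    exact (le_abs_self _).trans hh
  exact le_csSup hbdd ⟨σ, hσ, rfl⟩

end C7
end ParityAux


namespace ParityAux
section Main
open Parity Matrix
open scoped Matrix.Norms.L2Operator MatrixOrder

lemma main {n m : ℕ} {d : Fin n → ℕ} (hn : 1 ≤ n) (hd : ∀ r, 1 ≤ d r) (hm : 1 ≤ m)
    (a : ∀ r : Fin n, Fin m → Matrix (Fin (d r)) (Fin (d r)) ℂ)
    (ha_sa : ∀ r i, (a r i).IsHermitian)
    (ha_norm : ∀ r i, opNorm (a r i) ≤ 1)
    (ρ : Matrix (∀ r, Fin (d r)) (∀ r, Fin (d r)) ℂ) (hρ : IsState ρ) :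
    excess d (∑ i : Fin m, kron (fun r => a r i)) ρ /
        Real.sqrt (m + ∑ i : Fin m, ∑ j ∈ Finset.univ.filter (fun j => i < j), phi a i j) ≤
      sInf {x : ℝ | ∃ σ ∈ ProdStates d, x = traceNorm (ρ - σ)} := by
  classical
  set B : Matrix (∀ r, Fin (d r)) (∀ r, Fin (d r)) ℂ :=
    ∑ i : Fin m, kron (fun r => a r i) with hBdef
  set Dv : ℝ := (m : ℝ) +
    ∑ i : Fin m, ∑ j ∈ Finset.univ.filter (fun j => i < j), phi a i j with hDv
  have hφ : 0 ≤ ∑ i : Fin m, ∑ j ∈ Finset.univ.filter (fun j => i < j), phi a i j :=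
    Finset.sum_nonneg fun i _ => Finset.sum_nonneg fun j _ => phi_nonneg a i j
  have hm1 : (1 : ℝ) ≤ (m : ℝ) := by exact_mod_cast hm
  have hDpos : 0 < Dv := by rw [hDv]; linarith
  have hsp : 0 < Real.sqrt Dv := Real.sqrt_pos.mpr hDpos
  have hBle : ‖B‖ ≤ Real.sqrt Dv := B_norm_le a ha_sa ha_norm
  obtain ⟨σ₀, hσ₀⟩ := prodStates_nonempty hd
  refine le_csInf ⟨traceNorm (ρ - σ₀), σ₀, hσ₀, rfl⟩ ?_
  rintro x ⟨σ, hσ, rfl⟩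
  have hst := prod_state_isState hσ
  have hXh : (ρ - σ).IsHermitian := hρ.1.1.sub hst.1.1
  have hhol : |(Matrix.trace ((ρ - σ) * B)).re| ≤ traceNorm (ρ - σ) * ‖B‖ := holder hXh B
  have htr : (Matrix.trace ((ρ - σ) * B)).re =
      (Matrix.trace (ρ * B)).re - (Matrix.trace (σ * B)).re := by
    rw [Matrix.sub_mul, Matrix.trace_sub, Complex.sub_re]
  have hγ : (Matrix.trace (σ * B)).re ≤ Gamma d B := trace_le_gamma B hσ
  have htn : 0 ≤ traceNorm (ρ - σ) := traceNorm_nonneg (ρ - σ)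
  have hkey : excess d B ρ ≤ traceNorm (ρ - σ) * Real.sqrt Dv := by
    unfold Parity.excess
    refine max_le ?_ (mul_nonneg htn hsp.le)
    have h5 : (Matrix.trace (ρ * B)).re - Gamma d B ≤ (Matrix.trace ((ρ - σ) * B)).re := by
      rw [htr]; linarith
    refine h5.trans ((le_abs_self _).trans (hhol.trans ?_))
    exact mul_le_mul_of_nonneg_left hBle htn
  rw [div_le_iff₀ hsp]
  exact hkey

end Main
end ParityAux


open Parity in
/-- Theorem 3.1(1): trace-norm separation from the product states. -/
theorem trace_norm_separation
    {n m : ℕ} {d : Fin n → ℕ} (hn : 1 ≤ n) (hd : ∀ r, 1 ≤ d r) (hm : 1 ≤ m)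
    (a : ∀ r : Fin n, Fin m → Matrix (Fin (d r)) (Fin (d r)) ℂ)
    (ha_sa : ∀ r i, (a r i).IsHermitian)
    (ha_norm : ∀ r i, opNorm (a r i) ≤ 1)
    (ρ : Matrix (∀ r, Fin (d r)) (∀ r, Fin (d r)) ℂ) (hρ : IsState ρ) :
    excess d (∑ i : Fin m, kron (fun r => a r i)) ρ /
        Real.sqrt (m + ∑ i : Fin m, ∑ j ∈ Finset.univ.filter (fun j => i < j), phi a i j) ≤
      sInf {x : ℝ | ∃ σ ∈ ProdStates d,
        x = traceNorm (ρ - σ)} :=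
  ParityAux.main hn hd hm a ha_sa ha_norm ρ hρ
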